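/- Let R be a commutative Noetherian local ring, let M and N be finitely generated R-modules, and let Tr M be the transpose of M associated to a finite free presentation of M. If Ext^1_R(Tr M, N) = 0 and Ext^2_R(Tr M, N) = 0, then the natural R-linear map M ⊗_R N → Hom_R(M^*, N), sending m ⊗ n to the homomorphism f ↦ f(m)·n, is an isomorphism. -/

import Mathlib

open CategoryTheory

/-- The `i`-th Ext module `Ext^i_R(X, Y)` of two `R`-modules. -/
noncomputable abbrev extMod (R : Type) [CommRing R] (i : ℕ)
    (X : Type) [AddCommGroup X] [Module R X]
    (Y : Type) [AddCommGroup Y] [Module R Y] : Type :=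
  ((Ext R (ModuleCat R) i).obj (Opposite.op (ModuleCat.of R X))).obj (ModuleCat.of R Y)

/-- A finite free presentation `P_1 → P_0 → M → 0` of `M`. -/
structure FiniteFreePresentation (R : Type) [CommRing R]
    (M : Type) [AddCommGroup M] [Module R M] where
  P1 : Type
  P0 : Type
  [addCommGroup1 : AddCommGroup P1]
  [addCommGroup0 : AddCommGroup P0]
  [module1 : Module R P1]
  [module0 : Module R P0]
  free1 : Module.Free R P1
  free0 : Module.Free R P0
  finite1 : Module.Finite R P1
  finite0 : Module.Finite R P0
  f : P1 →ₗ[R] P0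
  ε : P0 →ₗ[R] M
  surj : Function.Surjective ε
  exact_at : Function.Exact f ε

attribute [instance] FiniteFreePresentation.addCommGroup1 FiniteFreePresentation.addCommGroup0
  FiniteFreePresentation.module1 FiniteFreePresentation.module0

/-- The transpose `Tr M` of `M` associated to a finite free presentation, i.e. the
cokernel of the dual map `P_0^* → P_1^*`. -/
abbrev FiniteFreePresentation.tr {R : Type} [CommRing R] {M : Type}
    [AddCommGroup M] [Module R M] (pr : FiniteFreePresentation R M) : Type :=
  Module.Dual R pr.P1 ⧸ LinearMap.range pr.f.dualMap

/-- The natural map `M ⊗_R N → Hom_R(M^*, N)` sending `m ⊗ n` to `f ↦ f(m) • n`. -/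
noncomputable def tensorToHomDual (R : Type) [CommRing R]
    (M : Type) [AddCommGroup M] [Module R M]
    (N : Type) [AddCommGroup N] [Module R N] :
    TensorProduct R M N →ₗ[R] (Module.Dual R M →ₗ[R] N) :=
  TensorProduct.lift
    (LinearMap.mk₂ R (fun m n => (Module.Dual.eval R M m).smulRight n)
      (fun m₁ m₂ n => by ext φ; simp [add_smul])
      (fun c m n => by ext φ; simp [mul_smul])
      (fun m n₁ n₂ => by ext φ; simp [smul_add])
      (fun c m n => by ext φ; simp [smul_comm c]))



section Algebra
open Module LinearMap Function

variable {R : Type} [CommRing R]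

@[simp] lemma tensorToHomDual_tmul {A N : Type} [AddCommGroup A] [Module R A]
    [AddCommGroup N] [Module R N] (a : A) (n : N) (ψ : Module.Dual R A) :
    tensorToHomDual R A N (a ⊗ₜ n) ψ = ψ a • n := rfl

lemma tensorToHomDual_naturality {A B N : Type} [AddCommGroup A] [Module R A]
    [AddCommGroup B] [Module R B] [AddCommGroup N] [Module R N]
    (u : A →ₗ[R] B) (t : TensorProduct R A N) :
    tensorToHomDual R B N (u.rTensor N t) = (tensorToHomDual R A N t) ∘ₗ u.dualMap := by
  induction t with
  | zero => simp
  | tmul a n => ext ψ; simp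
  | add x y hx hy => simp [hx, hy, LinearMap.add_comp]

lemma tensorToHomDual_bijective_of_free (P N : Type) [AddCommGroup P] [Module R P]
    [AddCommGroup N] [Module R N] [Module.Free R P] [Module.Finite R P] :
    Function.Bijective (tensorToHomDual R P N) := by
  have heq : tensorToHomDual R P N =
      (dualTensorHom R (Module.Dual R P) N) ∘ₗ ((Module.Dual.eval R P).rTensor N) := by
    apply TensorProduct.ext'
    intro a n
    ext ψ
    simp
  rw [heq]
  have h1 : Function.Bijective (dualTensorHom R (Module.Dual R P) N) := by
    have h := (dualTensorHomEquiv R (Module.Dual R P) N).bijective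
    rwa [show ⇑(dualTensorHomEquiv R (Module.Dual R P) N)
      = ⇑(dualTensorHom R (Module.Dual R P) N) from
      funext fun _ => rfl] at h
  have h2 : Function.Bijective ((Module.Dual.eval R P).rTensor N) := by
    have h := (LinearEquiv.rTensor N (Module.evalEquiv R P)).bijective
    rwa [show ⇑(LinearEquiv.rTensor N (Module.evalEquiv R P))
      = ⇑((Module.Dual.eval R P).rTensor N) by
        rw [← Module.evalEquiv_toLinearMap]; rfl] at h
  exact h1.comp h2


variable {R : Type} [CommRing R]
variable {M P0 P1 Q2 Q3 N : Type}
  [AddCommGroup M] [Module R M] [AddCommGroup P0] [Module R P0]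
  [AddCommGroup P1] [Module R P1] [AddCommGroup Q2] [Module R Q2]
  [AddCommGroup Q3] [Module R Q3] [AddCommGroup N] [Module R N]

-- the two exactness consequences of Ext vanishing, transferred to concrete statements
theorem hom_sequence_exact
    (f : P1 →ₗ[R] P0) (ε : P0 →ₗ[R] M) (hε : Surjective ε) (hfε : Exact f ε)
    (d2 : Q2 →ₗ[R] Dual R P0) (d3 : Q3 →ₗ[R] Q2)
    (hd21 : f.dualMap ∘ₗ d2 = 0)
    (h21 : ker f.dualMap ≤ range d2)
    (hd32 : d2 ∘ₗ d3 = 0)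
    (E1 : ∀ h : Dual R P0 →ₗ[R] N, h ∘ₗ d2 = 0 → ∃ k : Dual R P1 →ₗ[R] N, h = k ∘ₗ f.dualMap)
    (E2 : ∀ g : Q2 →ₗ[R] N, g ∘ₗ d3 = 0 → ∃ h : Dual R P0 →ₗ[R] N, g = h ∘ₗ d2) :
    (∀ Φ : Dual R M →ₗ[R] N, ∃ h : Dual R P0 →ₗ[R] N, Φ = h ∘ₗ ε.dualMap) ∧
    (∀ h : Dual R P0 →ₗ[R] N, h ∘ₗ ε.dualMap = 0 →
      ∃ k : Dual R P1 →ₗ[R] N, h = k ∘ₗ f.dualMap) := by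
  set ι := ε.dualMap with hιdef
  have hεf : ε ∘ₗ f = 0 := by
    ext x; exact hfε.apply_apply_eq_zero x
  have hι : Injective ι := by
    intro φ ψ h
    ext m
    obtain ⟨x, rfl⟩ := hε m
    exact DFunLike.congr_fun h x
  have hdι : f.dualMap ∘ₗ ι = 0 := by
    refine LinearMap.ext fun φ => LinearMap.ext fun x => ?_
    show φ (ε (f x)) = (0 : Dual R P1) x
    have h0 : ε (f x) = 0 := DFunLike.congr_fun hεf x
    rw [h0, map_zero]; rfl
  -- range ι ≤ ker f.dualMap, so (after codRestricting) define π2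
  have hrange : range d2 ≤ range ι := by
    rintro _ ⟨x, rfl⟩
    -- d2 x ∈ ker f.dualMap; show it's in range ι
    have hk : f.dualMap (d2 x) = 0 := by
      rw [← LinearMap.comp_apply, hd21]; rfl
    -- ker f.dualMap = range ι: need ψ with ψ ∘ ε = d2 x given (d2 x) ∘ f = 0
    -- build via liftQ along ker ε
    have hle : ker ε ≤ ker (d2 x) := by
      intro y hy
      obtain ⟨z, rfl⟩ := (hfε y).mp hy
      exact DFunLike.congr_fun hk z
    refine ⟨((ker ε).liftQ (d2 x) hle) ∘ₗ
      (LinearMap.quotKerEquivOfSurjective ε hε).symm.toLinearMap, ?_⟩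
    ext y
    simp only [hιdef, dualMap_apply, LinearMap.coe_comp, Function.comp_apply, LinearEquiv.coe_toLinearMap]
    have : (LinearMap.quotKerEquivOfSurjective ε hε).symm (ε y) = Submodule.Quotient.mk y := by
      apply (LinearMap.quotKerEquivOfSurjective ε hε).injective
      rw [LinearEquiv.apply_symm_apply]
      rfl
    rw [this]
    rfl
  -- π2 with ι ∘ π2 = d2
  set e := LinearEquiv.ofInjective ι hι with hedef
  set π2 : Q2 →ₗ[R] Dual R M :=
    e.symm.toLinearMap ∘ₗ (d2.codRestrict (range ι) (fun x => hrange ⟨x, rfl⟩)) with hπ2def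
  have hιπ2 : ∀ x, ι (π2 x) = d2 x := by
    intro x
    have : (e (π2 x) : Dual R P0) = d2 x := by
      simp only [hπ2def, LinearMap.coe_comp, Function.comp_apply, LinearEquiv.coe_toLinearMap,
        LinearEquiv.apply_symm_apply]
      rfl
    rw [← this]
    rfl
  have hπ2surj : Surjective π2 := by
    intro φ
    have hk : ι φ ∈ ker f.dualMap := by
      rw [LinearMap.mem_ker, ← LinearMap.comp_apply, hdι]; rfl
    obtain ⟨x, hx⟩ := h21 hk
    exact ⟨x, hι (by rw [hιπ2, hx])⟩
  have hπ2d3 : π2 ∘ₗ d3 = 0 := by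
    refine LinearMap.ext fun x => ?_
    apply hι
    show ι (π2 (d3 x)) = ι ((0 : Q3 →ₗ[R] Dual R M) x)
    rw [hιπ2]
    simp only [LinearMap.zero_apply, map_zero]
    rw [← LinearMap.comp_apply, hd32]
    rfl
  constructor
  · intro Φ
    obtain ⟨h, hh⟩ := E2 (Φ ∘ₗ π2) (by rw [LinearMap.comp_assoc, hπ2d3, LinearMap.comp_zero])
    refine ⟨h, ?_⟩
    ext φ
    obtain ⟨x, rfl⟩ := hπ2surj φ
    have := DFunLike.congr_fun hh x
    simp only [LinearMap.coe_comp, Function.comp_apply] at this ⊢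
    rw [this, hιπ2]
  · intro h hh
    refine E1 h ?_
    ext x
    simp only [LinearMap.coe_comp, Function.comp_apply, LinearMap.zero_apply, ← hιπ2]
    exact DFunLike.congr_fun hh (π2 x)


variable {M' P0 P1 N' : Type}
  [AddCommGroup M'] [Module R M'] [AddCommGroup P0] [Module R P0]
  [AddCommGroup P1] [Module R P1] [AddCommGroup N'] [Module R N']
  [Module.Free R P0] [Module.Finite R P0] [Module.Free R P1] [Module.Finite R P1]

theorem tensorToHomDual_bijective_of_hom_sequence
    (f : P1 →ₗ[R] P0) (ε : P0 →ₗ[R] M') (hε : Function.Surjective ε)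
    (hfε : Function.Exact f ε)
    (S1 : ∀ Φ : Module.Dual R M' →ₗ[R] N', ∃ h : Module.Dual R P0 →ₗ[R] N', Φ = h ∘ₗ ε.dualMap)
    (S2 : ∀ h : Module.Dual R P0 →ₗ[R] N', h ∘ₗ ε.dualMap = 0 →
      ∃ k : Module.Dual R P1 →ₗ[R] N', h = k ∘ₗ f.dualMap) :
    Function.Bijective (tensorToHomDual R M' N') := by
  have hεf : ε ∘ₗ f = 0 := LinearMap.ext fun x => hfε.apply_apply_eq_zero x
  have hT0 := tensorToHomDual_bijective_of_free (R := R) P0 N'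
  have hT1 := tensorToHomDual_bijective_of_free (R := R) P1 N'
  have hsurj : Function.Surjective (ε.rTensor N') := LinearMap.rTensor_surjective N' hε
  constructor
  · -- injective
    rw [injective_iff_map_eq_zero]
    intro t ht
    obtain ⟨x, rfl⟩ := hsurj t
    have h0 : (tensorToHomDual R P0 N' x) ∘ₗ ε.dualMap = 0 := by
      rw [← tensorToHomDual_naturality, ht]
    obtain ⟨k, hk⟩ := S2 _ h0
    obtain ⟨y, rfl⟩ := hT1.2 k
    have hxy : x = f.rTensor N' y := hT0.1 (by rw [tensorToHomDual_naturality, hk])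
    rw [hxy, ← LinearMap.comp_apply, ← LinearMap.rTensor_comp, hεf]
    simp
  · -- surjective
    intro Φ
    obtain ⟨h, hh⟩ := S1 Φ
    obtain ⟨x, rfl⟩ := hT0.2 h
    exact ⟨ε.rTensor N' x, by rw [tensorToHomDual_naturality, ← hh]⟩
end Algebra

noncomputable section Cat

open CategoryTheory Limits ModuleCat

variable {R : Type} [CommRing R] {M : Type} [AddCommGroup M] [Module R M]

instance (pr : FiniteFreePresentation R M) : Module.Free R pr.P1 := pr.free1
instance (pr : FiniteFreePresentation R M) : Module.Free R pr.P0 := pr.free0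
instance (pr : FiniteFreePresentation R M) : Module.Finite R pr.P1 := pr.finite1
instance (pr : FiniteFreePresentation R M) : Module.Finite R pr.P0 := pr.finite0

variable (pr : FiniteFreePresentation R M)

/-- The chain complex underlying our chosen projective resolution of `Tr M`. -/
def trComplex : ChainComplex (ModuleCat R) ℕ :=
  ChainComplex.mk' (ModuleCat.of R (Module.Dual R pr.P1)) (ModuleCat.of R (Module.Dual R pr.P0))
    (ModuleCat.ofHom pr.f.dualMap)
    (fun g => ⟨_, Projective.d g, (Category.assoc _ _ _).trans ((congrArg _ (kernel.condition g)).trans Limits.comp_zero)⟩)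

lemma trComplex_d_1_0 : (trComplex pr).d 1 0 = ModuleCat.ofHom pr.f.dualMap := by
  simp [trComplex]

lemma trComplex_exactAt_succ (n : ℕ) : (trComplex pr).ExactAt (n + 1) := by
  rw [HomologicalComplex.exactAt_iff' _ (n + 1 + 1) (n + 1) n (by simp) (by simp)]
  let e : (trComplex pr).X (n + 2) ≅ Projective.syzygies ((trComplex pr).d (n + 1) n) :=
    ChainComplex.mk'XIso _ _ _ _ n
  have hd : (trComplex pr).d (n + 2) (n + 1) = e.hom ≫ Projective.d ((trComplex pr).d (n + 1) n) :=
    ChainComplex.mk'_d _ _ _ _ n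
  refine (ShortComplex.exact_iff_of_iso ?_).1 (exact_d_f ((trComplex pr).d (n + 1) n))
  refine ShortComplex.isoMk e.symm (Iso.refl _) (Iso.refl _) ?_ ?_
  · exact ((Iso.inv_comp_eq e).2 hd).trans (Category.comp_id _).symm
  · exact (Category.id_comp _).trans (Category.comp_id _).symm

instance trComplex_projective (n : ℕ) : Projective ((trComplex pr).X n) := by
  obtain (_ | _ | _ | n) := n
  · exact (IsProjective.iff_projective _).mp
      (inferInstance : Module.Projective R (Module.Dual R pr.P1))
  · exact (IsProjective.iff_projective _).mp
      (inferInstance : Module.Projective R (Module.Dual R pr.P0))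
  · apply Projective.projective_over
  · apply Projective.projective_over

lemma dualMap_comp_mkQ :
    ModuleCat.ofHom (R := R) pr.f.dualMap ≫ ModuleCat.ofHom (LinearMap.range pr.f.dualMap).mkQ
      = 0 := by
  apply ModuleCat.hom_ext
  apply LinearMap.ext
  intro φ
  show (LinearMap.range pr.f.dualMap).mkQ (pr.f.dualMap φ) = 0
  rw [Submodule.mkQ_apply, Submodule.Quotient.mk_eq_zero]
  exact ⟨φ, rfl⟩

lemma trComplex_comp_mkQ :
    (trComplex pr).d 1 0 ≫ ModuleCat.ofHom (LinearMap.range pr.f.dualMap).mkQ = 0 := by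
  rw [trComplex_d_1_0]
  exact dualMap_comp_mkQ pr

/-- Our chosen projective resolution of `Tr M`. -/
def trRes : ProjectiveResolution (ModuleCat.of R pr.tr) where
  complex := trComplex pr
  π := (ChainComplex.toSingle₀Equiv _ _).symm
    ⟨ModuleCat.ofHom (LinearMap.range pr.f.dualMap).mkQ, trComplex_comp_mkQ pr⟩
  quasiIso := ⟨fun n => by
    cases n with
    | zero =>
      rw [ChainComplex.quasiIsoAt₀_iff, ShortComplex.quasiIso_iff_of_zeros']
      · have hexact : (ShortComplex.mk (ModuleCat.ofHom (R := R) pr.f.dualMap)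
            (ModuleCat.ofHom (LinearMap.range pr.f.dualMap).mkQ)
            (dualMap_comp_mkQ pr)).Exact := by
          rw [ShortComplex.moduleCat_exact_iff_range_eq_ker]
          show LinearMap.range pr.f.dualMap
            = LinearMap.ker (LinearMap.range pr.f.dualMap).mkQ
          rw [Submodule.ker_mkQ]
        have hepi : Epi (ShortComplex.mk (ModuleCat.ofHom (R := R) pr.f.dualMap)
            (ModuleCat.ofHom (LinearMap.range pr.f.dualMap).mkQ)
            (dualMap_comp_mkQ pr)).g := by
          rw [ModuleCat.epi_iff_surjective]
          exact Submodule.mkQ_surjective _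
        refine (ShortComplex.exact_and_epi_g_iff_of_iso ?_).2 ⟨hexact, hepi⟩
        exact ShortComplex.isoMk (Iso.refl _) (Iso.refl _) (Iso.refl _)
          (by simp [trComplex]; rfl) (by simp; rfl)
      all_goals rfl
    | succ n =>
      rw [quasiIsoAt_iff_exactAt']
      · apply trComplex_exactAt_succ
      · apply ChainComplex.exactAt_succ_single_obj⟩


lemma trComplex_hom_exact (N : Type) [AddCommGroup N] [Module R N] (i : ℕ)
    (h : Subsingleton (extMod R (i + 1) pr.tr N))
    (g : (trComplex pr).X (i+1) ⟶ ModuleCat.of R N)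
    (hg : (trComplex pr).d (i+2) (i+1) ≫ g = 0) :
    ∃ k : (trComplex pr).X i ⟶ ModuleCat.of R N, g = (trComplex pr).d (i+1) i ≫ k := by
  have hd : ∀ (a b : ℕ) (x : (trComplex pr).X a ⟶ ModuleCat.of R N),
      ((trRes pr).complex.linearYonedaObj R (ModuleCat.of R N)).d a b x
        = (trComplex pr).d b a ≫ x := fun a b x =>
    (congrArg (fun φ => φ x)
      (ChainComplex.linearYonedaObj_d (trRes pr).complex R (ModuleCat.of R N) a b)).trans rfl
  have hsub : Subsingleton
      (((trRes pr).complex.linearYonedaObj R (ModuleCat.of R N)).homology (i+1)) :=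
    (((trRes pr).isoExt (i+1) (ModuleCat.of R N)).toLinearEquiv.toEquiv.symm).subsingleton
  have hex : ((trRes pr).complex.linearYonedaObj R (ModuleCat.of R N)).ExactAt (i+1) := by
    rw [HomologicalComplex.exactAt_iff_isZero_homology]
    exact ModuleCat.isZero_of_subsingleton _
  rw [HomologicalComplex.exactAt_iff' _ i (i+1) (i+2) (by simp) (by simp),
    ShortComplex.moduleCat_exact_iff] at hex
  obtain ⟨k, hk⟩ := hex g ((hd (i+1) (i+2) g).trans hg)
  exact ⟨k, ((hd i (i+1) k).symm.trans hk).symm⟩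

end Cat

/-- If `Ext^1_R(Tr M, N) = 0` and `Ext^2_R(Tr M, N) = 0`, then the natural map
`M ⊗_R N → Hom_R(M^*, N)`, `m ⊗ n ↦ (f ↦ f(m)·n)`, is an isomorphism. -/
theorem tensorToHomDual_bijective_of_ext_trM_vanishing
    (R : Type) [CommRing R] [IsNoetherianRing R] [IsLocalRing R]
    (M N : Type) [AddCommGroup M] [Module R M] [AddCommGroup N] [Module R N]
    [Module.Finite R M] [Module.Finite R N]
    (pr : FiniteFreePresentation R M)
    (h1 : Subsingleton (extMod R 1 pr.tr N))
    (h2 : Subsingleton (extMod R 2 pr.tr N)) :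
    Function.Bijective (tensorToHomDual R M N) := by
  have hd21 : pr.f.dualMap ∘ₗ
      (((trComplex pr).d 2 1).hom : ↥((trComplex pr).X 2) →ₗ[R] Module.Dual R pr.P0) = 0 := by
    have h := (trComplex pr).d_comp_d 2 1 0
    rw [trComplex_d_1_0] at h
    exact congrArg ModuleCat.Hom.hom h
  have h21 : LinearMap.ker pr.f.dualMap ≤ LinearMap.range
      (((trComplex pr).d 2 1).hom : ↥((trComplex pr).X 2) →ₗ[R] Module.Dual R pr.P0) := by
    have hex := trComplex_exactAt_succ pr 0
    rw [HomologicalComplex.exactAt_iff' _ 2 1 0 (by simp) (by simp),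
      ShortComplex.moduleCat_exact_iff_ker_sub_range] at hex
    intro x hx
    refine hex (LinearMap.mem_ker.2 ?_)
    have e := LinearMap.congr_fun (congrArg ModuleCat.Hom.hom (trComplex_d_1_0 pr)) x
    exact e.trans (LinearMap.mem_ker.1 hx)
  have hd32 : (((trComplex pr).d 2 1).hom : ↥((trComplex pr).X 2) →ₗ[R] Module.Dual R pr.P0) ∘ₗ
      (((trComplex pr).d 3 2).hom : ↥((trComplex pr).X 3) →ₗ[R] ↥((trComplex pr).X 2)) = 0 :=
    congrArg ModuleCat.Hom.hom ((trComplex pr).d_comp_d 3 2 1)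
  have E1 : ∀ h : Module.Dual R pr.P0 →ₗ[R] N,
      h ∘ₗ (((trComplex pr).d 2 1).hom : ↥((trComplex pr).X 2) →ₗ[R] Module.Dual R pr.P0) = 0 →
      ∃ k : Module.Dual R pr.P1 →ₗ[R] N, h = k ∘ₗ pr.f.dualMap := by
    intro h hhd
    obtain ⟨k, hk⟩ := trComplex_hom_exact pr N 0 h1 (ModuleCat.ofHom h) (ModuleCat.hom_ext hhd)
    rw [trComplex_d_1_0] at hk
    exact ⟨k.hom, congrArg ModuleCat.Hom.hom hk⟩
  have E2 : ∀ g : ↥((trComplex pr).X 2) →ₗ[R] N,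
      g ∘ₗ (((trComplex pr).d 3 2).hom : ↥((trComplex pr).X 3) →ₗ[R] ↥((trComplex pr).X 2)) = 0 →
      ∃ h : Module.Dual R pr.P0 →ₗ[R] N,
        g = h ∘ₗ (((trComplex pr).d 2 1).hom : ↥((trComplex pr).X 2) →ₗ[R] Module.Dual R pr.P0) :=
    fun g hg => by
      obtain ⟨k, hk⟩ := trComplex_hom_exact pr N 1 h2 (ModuleCat.ofHom g) (ModuleCat.hom_ext hg)
      exact ⟨k.hom, congrArg ModuleCat.Hom.hom hk⟩
  obtain ⟨S1, S2⟩ := hom_sequence_exact pr.f pr.ε pr.surj pr.exact_at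
    ((trComplex pr).d 2 1).hom ((trComplex pr).d 3 2).hom hd21 h21 hd32 E1 E2
  exact tensorToHomDual_bijective_of_hom_sequence pr.f pr.ε pr.surj pr.exact_at S1 S2
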